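/- Let K : B(0,r) ⊂ ℂ^k → ℂ^k be holomorphic with K(0)=0, let D = d_0 K be its differential at 0, and suppose the second derivatives of K are bounded by B on B(0,r/2). Suppose a|v| ≤ |D v| ≤ b|v| for all v, for some 0 < a ≤ b. Then for any γ > 0, on the ball of radius ρ := min{r/2, (e^γ − 1)b/(cB), (1 − e^{-γ})a/(cB)} (for a dimensional constant c), one has for all u, v in B(0,ρ): a e^{-γ} |u − v| ≤ |K(u) − K(v)| ≤ b e^{γ} |u − v|. -/

import Mathlib

set_option maxHeartbeats 1000000
set_option synthInstance.maxHeartbeats 400000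

open Metric Set MeasureTheory
open scoped Real

namespace BilipAux

variable {k : ℕ}

noncomputable instance : MeasurableSpace (EuclideanSpace ℂ (Fin k)) := borel _
instance : BorelSpace (EuclideanSpace ℂ (Fin k)) := ⟨rfl⟩

instance : SecondCountableTopology
    (EuclideanSpace ℂ (Fin k) →L[ℂ] EuclideanSpace ℂ (Fin k)) := by
  have : FiniteDimensional ℂ (EuclideanSpace ℂ (Fin k) →L[ℂ] EuclideanSpace ℂ (Fin k)) :=
    inferInstance
  exact secondCountable_of_proper

lemma slice_hasDerivAt {K : EuclideanSpace ℂ (Fin k) → EuclideanSpace ℂ (Fin k)}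
    {x w : EuclideanSpace ℂ (Fin k)} (hK : DifferentiableAt ℂ K x) :
    HasDerivAt (fun z : ℂ => K (x + z • w)) (fderiv ℂ K x w) 0 := by
  have h0 : HasDerivAt (fun z : ℂ => x + z • w) w 0 := by
    simpa using ((hasDerivAt_id (0 : ℂ)).smul_const w).const_add x
  have h1 : HasFDerivAt K (fderiv ℂ K x) ((fun z : ℂ => x + z • w) 0) := by
    simpa using hK.hasFDerivAt
  exact h1.comp_hasDerivAt 0 h0

lemma fderiv_norm_le {K : EuclideanSpace ℂ (Fin k) → EuclideanSpace ℂ (Fin k)} {R d M : ℝ}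
    (hd : DifferentiableOn ℂ K (ball 0 R)) (hdd : 0 < d)
    (hM : ∀ z ∈ ball (0 : EuclideanSpace ℂ (Fin k)) R, ‖K z‖ ≤ M)
    {p : EuclideanSpace ℂ (Fin k)} (hp : ‖p‖ + d < R) :
    ‖fderiv ℂ K p‖ ≤ M / d := by
  have hpR : ‖p‖ < R := by nlinarith [norm_nonneg p]
  have hR0 : 0 < R := by nlinarith [norm_nonneg p]
  have hM0 : 0 ≤ M := le_trans (norm_nonneg _) (hM 0 (by simpa using hR0))
  refine ContinuousLinearMap.opNorm_le_bound _ (by positivity) fun v => ?_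
  rcases eq_or_ne v 0 with rfl | hv
  · simp
  have hvn : ((‖v‖ : ℝ) : ℂ) ≠ 0 := by
    exact_mod_cast (norm_ne_zero_iff.2 hv)
  set w : EuclideanSpace ℂ (Fin k) := ((‖v‖ : ℝ) : ℂ)⁻¹ • v with hw
  have hwn : ‖w‖ = 1 := by
    rw [hw, norm_smul, norm_inv]
    simp [norm_ne_zero_iff.2 hv]
  have hmem : ∀ z : ℂ, ‖z‖ ≤ d → p + z • w ∈ ball (0 : EuclideanSpace ℂ (Fin k)) R := by
    intro z hz
    rw [mem_ball_zero_iff]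
    calc ‖p + z • w‖ ≤ ‖p‖ + ‖z • w‖ := norm_add_le _ _
      _ = ‖p‖ + ‖z‖ := by rw [norm_smul, hwn, mul_one]
      _ ≤ ‖p‖ + d := by linarith
      _ < R := hp
  have hKp : DifferentiableAt ℂ K p :=
    hd.differentiableAt (isOpen_ball.mem_nhds (by rwa [mem_ball_zero_iff]))
  have hg0 : HasDerivAt (fun z : ℂ => K (p + z • w)) (fderiv ℂ K p w) 0 := slice_hasDerivAt hKp
  have hgd : DifferentiableOn ℂ (fun z : ℂ => K (p + z • w)) (ball (0 : ℂ) (R - ‖p‖)) := by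
    intro z hz
    have hz' : ‖z‖ < R - ‖p‖ := mem_ball_zero_iff.1 hz
    have hKz : DifferentiableAt ℂ K (p + z • w) := by
      refine hd.differentiableAt (isOpen_ball.mem_nhds ?_)
      rw [mem_ball_zero_iff]
      calc ‖p + z • w‖ ≤ ‖p‖ + ‖z • w‖ := norm_add_le _ _
        _ = ‖p‖ + ‖z‖ := by rw [norm_smul, hwn, mul_one]
        _ < R := by linarith
    exact (hKz.comp z ((differentiableAt_id.smul_const w).const_add p)).differentiableWithinAt
  have hdc : DiffContOnCl ℂ (fun z : ℂ => K (p + z • w)) (ball (0 : ℂ) d) := by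
    refine ⟨hgd.mono (ball_subset_ball (by linarith)), (hgd.continuousOn).mono ?_⟩
    rw [closure_ball (0 : ℂ) hdd.ne']
    exact closedBall_subset_ball (by linarith)
  have hsp : ∀ z ∈ sphere (0 : ℂ) d, ‖K (p + z • w)‖ ≤ M := fun z hz =>
    hM _ (hmem z (le_of_eq (mem_sphere_zero_iff_norm.1 hz)))
  have key := Complex.norm_deriv_le_of_forall_mem_sphere_norm_le hdd hdc hsp
  rw [hg0.deriv] at key
  have hv' : fderiv ℂ K p v = ((‖v‖ : ℝ) : ℂ) • fderiv ℂ K p w := by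
    rw [← _root_.map_smul, hw, smul_smul, mul_inv_cancel₀ hvn, one_smul]
  rw [hv', norm_smul]
  have : ‖((‖v‖ : ℝ) : ℂ)‖ = ‖v‖ := by simp
  rw [this]
  calc ‖v‖ * ‖fderiv ℂ K p w‖ ≤ ‖v‖ * (M / d) := by
        exact mul_le_mul_of_nonneg_left key (norm_nonneg v)
    _ = M / d * ‖v‖ := by ring

lemma directional_diffAt {K : EuclideanSpace ℂ (Fin k) → EuclideanSpace ℂ (Fin k)} {R : ℝ}
    (hd : DifferentiableOn ℂ K (ball 0 R)) {w : EuclideanSpace ℂ (Fin k)} (hw : ‖w‖ ≤ 1)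
    {x₀ : EuclideanSpace ℂ (Fin k)} {d : ℝ} (hdd : 0 < d) (hx : ‖x₀‖ + 3 * d < R) :
    DifferentiableAt ℂ (fun x => fderiv ℂ K x w) x₀ := by
  have hR0 : 0 < R := by nlinarith [norm_nonneg x₀]
  -- a uniform bound for K
  obtain ⟨M, hM⟩ := (isCompact_closedBall (0 : EuclideanSpace ℂ (Fin k)) (‖x₀‖ + 5 * d / 2)).exists_bound_of_continuousOn
    (hd.continuousOn.mono (closedBall_subset_ball (by linarith)))
  -- uniform bound for fderiv K near the circle points
  have hC : ∀ q : EuclideanSpace ℂ (Fin k), ‖q‖ < ‖x₀‖ + 2 * d →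
      ‖fderiv ℂ K q‖ ≤ M / (d / 2) := by
    intro q hq
    refine fderiv_norm_le (R := ‖x₀‖ + 5 * d / 2)
      (hd.mono (ball_subset_ball (by linarith))) (by positivity)
      (fun z hz => hM z (ball_subset_closedBall hz)) (by linarith)
  set μ : Measure ℝ := volume.restrict (Icc 0 (2 * π)) with hμ
  -- the integrand and its derivative in x
  set F : EuclideanSpace ℂ (Fin k) → ℝ → EuclideanSpace ℂ (Fin k) := fun x θ =>
    (2 * ↑π * Complex.I : ℂ)⁻¹ • (deriv (circleMap 0 d) θ •
      ((circleMap 0 d θ) ^ (-2 : ℤ) • K (x + circleMap 0 d θ • w))) with hF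
  set F' : EuclideanSpace ℂ (Fin k) → ℝ →
      (EuclideanSpace ℂ (Fin k) →L[ℂ] EuclideanSpace ℂ (Fin k)) := fun x θ =>
    (2 * ↑π * Complex.I : ℂ)⁻¹ • (deriv (circleMap 0 d) θ •
      ((circleMap 0 d θ) ^ (-2 : ℤ) • fderiv ℂ K (x + circleMap 0 d θ • w))) with hF'
  have hmemball : ∀ x ∈ ball x₀ d, ∀ θ : ℝ,
      x + circleMap 0 d θ • w ∈ ball (0 : EuclideanSpace ℂ (Fin k)) (‖x₀‖ + 2 * d) := by
    intro x hx θ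
    have hxn : ‖x‖ - ‖x₀‖ ≤ ‖x - x₀‖ := norm_sub_norm_le x x₀
    have hxb : ‖x - x₀‖ < d := mem_ball_iff_norm.1 hx
    have hcm : ‖circleMap 0 d θ‖ = d := by
      simpa [abs_of_pos hdd] using abs_circleMap_zero d θ
    rw [mem_ball_zero_iff]
    calc ‖x + circleMap 0 d θ • w‖ ≤ ‖x‖ + ‖circleMap 0 d θ • w‖ := norm_add_le _ _
      _ ≤ ‖x‖ + ‖circleMap 0 d θ‖ * ‖w‖ := by rw [norm_smul]
      _ ≤ ‖x‖ + d * 1 := by rw [hcm]; gcongr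
      _ < ‖x₀‖ + 2 * d := by linarith
  have hsubR : ball (0 : EuclideanSpace ℂ (Fin k)) (‖x₀‖ + 2 * d) ⊆ ball 0 R :=
    ball_subset_ball (by linarith)
  -- representation of the directional derivative as an integral
  have hrep : ∀ x ∈ ball x₀ d, fderiv ℂ K x w = ∫ θ, F x θ ∂μ := by
    intro x hx
    have hxn : ‖x‖ < ‖x₀‖ + d := by
      have h1 : ‖x‖ - ‖x₀‖ ≤ ‖x - x₀‖ := norm_sub_norm_le x x₀
      have h2 : ‖x - x₀‖ < d := mem_ball_iff_norm.1 hx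
      linarith
    have hKx : DifferentiableAt ℂ K x :=
      hd.differentiableAt (isOpen_ball.mem_nhds (by rw [mem_ball_zero_iff]; linarith))
    have hg0 : HasDerivAt (fun z : ℂ => K (x + z • w)) (fderiv ℂ K x w) 0 :=
      slice_hasDerivAt hKx
    have hgd : DifferentiableOn ℂ (fun z : ℂ => K (x + z • w)) (ball (0 : ℂ) (2 * d)) := by
      intro z hz
      have hz' : ‖z‖ < 2 * d := mem_ball_zero_iff.1 hz
      have hKz : DifferentiableAt ℂ K (x + z • w) := by
        refine hd.differentiableAt (isOpen_ball.mem_nhds ?_)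
        rw [mem_ball_zero_iff]
        calc ‖x + z • w‖ ≤ ‖x‖ + ‖z‖ * ‖w‖ := (norm_add_le _ _).trans (by rw [norm_smul])
          _ ≤ ‖x‖ + ‖z‖ * 1 := by gcongr
          _ < R := by linarith
      exact (hKz.comp z ((differentiableAt_id.smul_const w).const_add x)).differentiableWithinAt
    have hdc : DiffContOnCl ℂ (fun z : ℂ => K (x + z • w)) (ball (0 : ℂ) d) := by
      refine ⟨hgd.mono (ball_subset_ball (by linarith)), (hgd.continuousOn).mono ?_⟩
      rw [closure_ball (0 : ℂ) hdd.ne']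
      exact closedBall_subset_ball (by linarith)
    have hcirc : deriv (fun z : ℂ => K (x + z • w)) 0 = (2 * ↑π * Complex.I : ℂ)⁻¹ •
        ∮ z in C(0, d), ((z - 0) ^ 2)⁻¹ • K (x + z • w) := by
      have := hdc.deriv_eq_smul_circleIntegral hdd
      simp only [one_div] at this
      rw [this, smul_smul, inv_mul_cancel₀ (by simp [Real.pi_ne_zero]), one_smul]
    rw [hg0.deriv] at hcirc
    rw [hcirc, circleIntegral_def_Icc, ← MeasureTheory.integral_smul]
    simp only [hF, sub_zero, hμ]
    simp only [zpow_neg, zpow_two, sq]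
  -- differentiate under the integral sign
  have hb0 : (0:ℝ) ≤ 2 * π := by positivity
  have hconst : ∀ x ∈ ball x₀ d, Continuous fun θ : ℝ => F x θ := by
    intro x hx
    have hc1 : Continuous fun θ : ℝ => x + circleMap 0 d θ • w :=
      continuous_const.add ((continuous_circleMap 0 d).smul continuous_const)
    have hc2 : Continuous fun θ : ℝ => K (x + circleMap 0 d θ • w) :=
      hd.continuousOn.comp_continuous hc1 fun θ => hsubR (hmemball x hx θ)
    have hc3 : Continuous fun θ : ℝ => (circleMap 0 d θ) ^ (-2 : ℤ) :=
      (continuous_circleMap 0 d).zpow₀ _ (fun θ => Or.inl (circleMap_ne_center hdd.ne'))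
    have hc4 : Continuous (deriv (circleMap 0 d)) := by
      have : deriv (circleMap 0 d) = fun θ => circleMap 0 d θ * Complex.I :=
        funext fun θ => deriv_circleMap 0 d θ
      rw [this]
      exact (continuous_circleMap 0 d).mul continuous_const
    exact ((hc4.fun_smul (hc3.fun_smul hc2)).fun_const_smul _)
  have hF_meas : ∀ᶠ x in nhds x₀, AEStronglyMeasurable (F x) μ := by
    filter_upwards [ball_mem_nhds x₀ hdd] with x hx
    exact (hconst x hx).aestronglyMeasurable
  have hF_int : Integrable (F x₀) μ := by
    rw [hμ]
    exact (hconst x₀ (mem_ball_self hdd)).integrableOn_Icc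
  have hF'_meas : AEStronglyMeasurable (F' x₀) μ := by
    have hm1 : StronglyMeasurable fun θ : ℝ => fderiv ℂ K (x₀ + circleMap 0 d θ • w) :=
      ((measurable_fderiv ℂ K).comp
        (continuous_const.add ((continuous_circleMap 0 d).smul
          continuous_const)).measurable).stronglyMeasurable
    have hm2 : StronglyMeasurable fun θ : ℝ =>
        (circleMap 0 d θ) ^ (-2 : ℤ) • fderiv ℂ K (x₀ + circleMap 0 d θ • w) :=
      (((continuous_circleMap 0 d).zpow₀ _
        (fun θ => Or.inl (circleMap_ne_center hdd.ne'))).stronglyMeasurable).smul hm1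
    have hm3 : StronglyMeasurable fun θ : ℝ => F' x₀ θ := by
      have hc4 : Continuous (deriv (circleMap 0 d)) := by
        have : deriv (circleMap 0 d) = fun θ => circleMap 0 d θ * Complex.I :=
          funext fun θ => deriv_circleMap 0 d θ
        rw [this]
        exact (continuous_circleMap 0 d).mul continuous_const
      exact continuous_const.stronglyMeasurable.fun_smul (hc4.stronglyMeasurable.fun_smul hm2)
    exact hm3.aestronglyMeasurable
  have hM0 : 0 ≤ M := le_trans (norm_nonneg _) (hM 0 (mem_closedBall_self (by positivity)))
  have hnorm1 : ‖(2 * ↑π * Complex.I : ℂ)⁻¹‖ = (2 * π)⁻¹ := by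
    rw [norm_inv]
    simp [Real.pi_nonneg, abs_of_nonneg]
  have hnorm2 : ∀ θ : ℝ, ‖deriv (circleMap 0 d) θ‖ = d := by
    intro θ
    rw [deriv_circleMap]
    simp [abs_of_pos hdd, norm_circleMap_zero]
  have hnorm3 : ∀ θ : ℝ, ‖(circleMap 0 d θ) ^ (-2 : ℤ)‖ = (d ^ 2)⁻¹ := by
    intro θ
    rw [norm_zpow]
    have : ‖circleMap 0 d θ‖ = d := by simpa [abs_of_pos hdd] using abs_circleMap_zero d θ
    rw [this, zpow_neg, zpow_two, sq]
  have hns : ∀ (cc : ℂ) (T : EuclideanSpace ℂ (Fin k) →L[ℂ] EuclideanSpace ℂ (Fin k)),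
      ‖cc • T‖ = ‖cc‖ * ‖T‖ := fun cc T => norm_smul cc T
  have h_bound : ∀ᵐ θ ∂μ, ∀ x ∈ ball x₀ d,
      ‖F' x θ‖ ≤ (2 * π)⁻¹ * (d * ((d ^ 2)⁻¹ * (M / (d / 2)))) := by
    refine Filter.Eventually.of_forall fun θ => fun x hx => ?_
    have hq := hC (x + circleMap 0 d θ • w) (mem_ball_zero_iff.1 (hmemball x hx θ))
    calc ‖F' x θ‖
        = (2 * π)⁻¹ * (d * ((d ^ 2)⁻¹ * ‖fderiv ℂ K (x + circleMap 0 d θ • w)‖)) := by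
          simp only [hF']
          rw [hns, hns, hns, hnorm1, hnorm2, hnorm3]
      _ ≤ (2 * π)⁻¹ * (d * ((d ^ 2)⁻¹ * (M / (d / 2)))) := by gcongr
  have bound_int : Integrable (fun _ : ℝ => (2 * π)⁻¹ * (d * ((d ^ 2)⁻¹ * (M / (d / 2))))) μ := by
    rw [hμ]
    exact integrableOn_const measure_Icc_lt_top.ne
  have h_diff : ∀ᵐ θ ∂μ, ∀ x ∈ ball x₀ d, HasFDerivAt (fun x => F x θ) (F' x θ) x := by
    refine Filter.Eventually.of_forall fun θ => fun x hx => ?_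
    have hKq : DifferentiableAt ℂ K (x + circleMap 0 d θ • w) :=
      hd.differentiableAt (isOpen_ball.mem_nhds (hsubR (hmemball x hx θ)))
    have base : HasFDerivAt (fun y : EuclideanSpace ℂ (Fin k) => K (y + circleMap 0 d θ • w))
        (fderiv ℂ K (x + circleMap 0 d θ • w)) x := by
      have h2 : HasFDerivAt (fun y : EuclideanSpace ℂ (Fin k) => y + circleMap 0 d θ • w)
          (ContinuousLinearMap.id ℂ (EuclideanSpace ℂ (Fin k))) x :=
        (hasFDerivAt_id x).add_const _
      have h1 := hKq.hasFDerivAt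
      have := h1.comp x h2
      exact this
    exact ((base.fun_const_smul _).fun_const_smul _).fun_const_smul _
  have key := hasFDerivAt_integral_of_dominated_of_fderiv_le (ball_mem_nhds x₀ hdd) hF_meas hF_int hF'_meas
    h_bound bound_int h_diff
  have final : HasFDerivAt (fun x => fderiv ℂ K x w) (∫ θ, F' x₀ θ ∂μ) x₀ := by
    refine key.congr_of_eventuallyEq ?_
    filter_upwards [ball_mem_nhds x₀ hdd] with x hx using hrep x hx
  exact final.differentiableAt

lemma fderiv_diffAt {K : EuclideanSpace ℂ (Fin k) → EuclideanSpace ℂ (Fin k)} {R : ℝ}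
    (hd : DifferentiableOn ℂ K (ball 0 R)) {x₀ : EuclideanSpace ℂ (Fin k)} {d : ℝ}
    (hdd : 0 < d) (hx : ‖x₀‖ + 3 * d < R) :
    DifferentiableAt ℂ (fderiv ℂ K) x₀ := by
  have hdir : ∀ j : Fin k,
      DifferentiableAt ℂ (fun x => fderiv ℂ K x (EuclideanSpace.single j (1:ℂ))) x₀ :=
    fun j => directional_diffAt hd (by simp [EuclideanSpace.norm_single]) hdd hx
  have hsum : ∀ v : EuclideanSpace ℂ (Fin k),
      v = ∑ j : Fin k, EuclideanSpace.proj j v • EuclideanSpace.single j (1:ℂ) := by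
    intro v
    have := (EuclideanSpace.basisFun (Fin k) ℂ).sum_repr v
    simp [EuclideanSpace.basisFun_apply, EuclideanSpace.basisFun_repr] at this
    exact this.symm
  have hdecomp : (fderiv ℂ K) = fun x => ∑ j : Fin k,
      ContinuousLinearMap.smulRightL ℂ (EuclideanSpace ℂ (Fin k)) (EuclideanSpace ℂ (Fin k))
        (EuclideanSpace.proj j) (fderiv ℂ K x (EuclideanSpace.single j (1:ℂ))) := by
    funext x
    refine ContinuousLinearMap.ext fun v => ?_
    rw [ContinuousLinearMap.sum_apply]
    conv_lhs => rw [hsum v]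
    rw [_root_.map_sum]
    refine Finset.sum_congr rfl fun j _ => ?_
    rw [_root_.map_smul]
    rfl
  rw [hdecomp]
  refine DifferentiableAt.fun_sum fun j _ => ?_
  exact (ContinuousLinearMap.smulRightL ℂ _ _
    (EuclideanSpace.proj j)).differentiableAt.comp x₀ (hdir j)

end BilipAux

open Metric

/-- Quantitative bi-Lipschitz estimate: there is a dimensional constant `c > 0` such
that for any holomorphic `K : B(0,r) ⊂ ℂ^k → ℂ^k` with `K 0 = 0`, differential `D` at
`0` satisfying `a‖v‖ ≤ ‖Dv‖ ≤ b‖v‖`, and second derivatives bounded by `B` on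
`B(0,r/2)`, one has on the ball of radius
`ρ = min(r/2, (e^γ−1)b/(cB), (1−e^{−γ})a/(cB))` the estimates
`a e^{−γ} ‖u−v‖ ≤ ‖K u − K v‖ ≤ b e^{γ} ‖u−v‖`. -/
theorem bilipschitz_estimate (k : ℕ) :
    ∃ c : ℝ, 0 < c ∧
      ∀ (r B a b γ : ℝ) (K : EuclideanSpace ℂ (Fin k) → EuclideanSpace ℂ (Fin k)),
        0 < r → 0 < B → 0 < a → a ≤ b → 0 < γ →
        DifferentiableOn ℂ K (ball 0 r) → K 0 = 0 →
        (∀ v, a * ‖v‖ ≤ ‖fderiv ℂ K 0 v‖ ∧ ‖fderiv ℂ K 0 v‖ ≤ b * ‖v‖) →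
        (∀ t ∈ ball (0 : EuclideanSpace ℂ (Fin k)) (r / 2), ‖iteratedFDeriv ℂ 2 K t‖ ≤ B) →
        ∀ u ∈ ball (0 : EuclideanSpace ℂ (Fin k))
            (min (r / 2) (min ((Real.exp γ - 1) * b / (c * B))
              ((1 - Real.exp (-γ)) * a / (c * B)))),
          ∀ v ∈ ball (0 : EuclideanSpace ℂ (Fin k))
            (min (r / 2) (min ((Real.exp γ - 1) * b / (c * B))
              ((1 - Real.exp (-γ)) * a / (c * B)))),
            a * Real.exp (-γ) * ‖u - v‖ ≤ ‖K u - K v‖ ∧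
            ‖K u - K v‖ ≤ b * Real.exp γ * ‖u - v‖ := by
  refine ⟨1, one_pos, ?_⟩
  intro r B a b γ K hr hB ha hab hγ hd hK0 hD hB2 u hu v hv
  have hb : 0 < b := lt_of_lt_of_le ha hab
  set D : EuclideanSpace ℂ (Fin k) →L[ℂ] EuclideanSpace ℂ (Fin k) := fderiv ℂ K 0 with hDdef
  set ρ : ℝ := min (r / 2) (min ((Real.exp γ - 1) * b / (1 * B))
    ((1 - Real.exp (-γ)) * a / (1 * B))) with hρdef
  have hρr : ρ ≤ r / 2 := min_le_left _ _
  have hρ1 : ρ ≤ (Real.exp γ - 1) * b / (1 * B) :=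
    le_trans (min_le_right _ _) (min_le_left _ _)
  have hρ2 : ρ ≤ (1 - Real.exp (-γ)) * a / (1 * B) :=
    le_trans (min_le_right _ _) (min_le_right _ _)
  have hur : u ∈ ball (0 : EuclideanSpace ℂ (Fin k)) ρ := hu
  have hvr : v ∈ ball (0 : EuclideanSpace ℂ (Fin k)) ρ := hv
  -- differentiability of fderiv K on ball (0, r/2)
  have hdiff2 : ∀ t ∈ ball (0 : EuclideanSpace ℂ (Fin k)) (r / 2),
      DifferentiableAt ℂ (fderiv ℂ K) t := by
    intro t ht
    refine BilipAux.fderiv_diffAt hd (d := r / 8) (by positivity) ?_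
    have := mem_ball_zero_iff.1 ht
    linarith
  -- second derivative bound
  have hf2 : ∀ t ∈ ball (0 : EuclideanSpace ℂ (Fin k)) (r / 2),
      ‖fderiv ℂ (fderiv ℂ K) t‖ ≤ B := by
    intro t ht
    refine ContinuousLinearMap.opNorm_le_bound _ hB.le fun m => ?_
    refine ContinuousLinearMap.opNorm_le_bound _ (by positivity) fun n => ?_
    have h2 := iteratedFDeriv_two_apply (𝕜 := ℂ) K t ![m, n]
    calc ‖(fderiv ℂ (fderiv ℂ K) t) m n‖ = ‖iteratedFDeriv ℂ 2 K t ![m, n]‖ := by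
          rw [h2]; simp
      _ ≤ ‖iteratedFDeriv ℂ 2 K t‖ * (‖m‖ * ‖n‖) := by
          have := (iteratedFDeriv ℂ 2 K t).le_opNorm ![m, n]
          simpa [Fin.prod_univ_two, mul_assoc] using this
      _ ≤ B * (‖m‖ * ‖n‖) := by
          have := hB2 t ht
          gcongr
      _ = B * ‖m‖ * ‖n‖ := by ring
  -- mean value theorem for fderiv K
  have hmvt : ∀ t ∈ ball (0 : EuclideanSpace ℂ (Fin k)) (r / 2),
      ‖fderiv ℂ K t - D‖ ≤ B * ‖t‖ := by
    intro t ht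
    have h0m : (0 : EuclideanSpace ℂ (Fin k)) ∈ ball (0 : EuclideanSpace ℂ (Fin k)) (r / 2) :=
      mem_ball_self (by positivity)
    have := (convex_ball (0 : EuclideanSpace ℂ (Fin k)) (r / 2)).norm_image_sub_le_of_norm_fderiv_le
      hdiff2 hf2 h0m ht
    simpa [hDdef] using this
  have hball : ball (0 : EuclideanSpace ℂ (Fin k)) ρ ⊆ ball 0 (r / 2) := ball_subset_ball hρr
  have hballr : ball (0 : EuclideanSpace ℂ (Fin k)) ρ ⊆ ball 0 r :=
    ball_subset_ball (by linarith)
  -- the perturbation g = K - D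
  have hgdiff : ∀ x ∈ ball (0 : EuclideanSpace ℂ (Fin k)) ρ,
      DifferentiableAt ℂ (fun y => K y - D y) x := by
    intro x hx
    exact (hd.differentiableAt (isOpen_ball.mem_nhds (hballr hx))).sub D.differentiableAt
  have hgd : ∀ x ∈ ball (0 : EuclideanSpace ℂ (Fin k)) ρ,
      ‖fderiv ℂ (fun y => K y - D y) x‖ ≤ B * ρ := by
    intro x hx
    have hKx : DifferentiableAt ℂ K x := hd.differentiableAt (isOpen_ball.mem_nhds (hballr hx))
    rw [fderiv_fun_sub hKx D.differentiableAt, D.fderiv]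
    calc ‖fderiv ℂ K x - D‖ ≤ B * ‖x‖ := hmvt x (hball hx)
      _ ≤ B * ρ := by
          have := (mem_ball_zero_iff.1 hx).le
          gcongr
  have hg := (convex_ball (0 : EuclideanSpace ℂ (Fin k)) ρ).norm_image_sub_le_of_norm_fderiv_le
    hgdiff hgd hvr hur
  have hKey : ‖K u - K v - D (u - v)‖ ≤ B * ρ * ‖u - v‖ := by
    have heq : (K u - D u) - (K v - D v) = K u - K v - D (u - v) := by
      rw [map_sub]; abel
    simpa [heq] using hg
  have hBρ1 : B * ρ ≤ (Real.exp γ - 1) * b := by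
    have h1 : B * ρ ≤ B * ((Real.exp γ - 1) * b / (1 * B)) := by gcongr
    rw [one_mul, mul_div_cancel₀ _ hB.ne'] at h1
    linarith
  have hBρ2 : B * ρ ≤ (1 - Real.exp (-γ)) * a := by
    have h1 : B * ρ ≤ B * ((1 - Real.exp (-γ)) * a / (1 * B)) := by gcongr
    rw [one_mul, mul_div_cancel₀ _ hB.ne'] at h1
    linarith
  have hDu : ‖D (u - v)‖ ≤ b * ‖u - v‖ := (hD (u - v)).2
  have hDl : a * ‖u - v‖ ≤ ‖D (u - v)‖ := (hD (u - v)).1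
  constructor
  · -- lower bound
    have h1 : ‖D (u - v)‖ - ‖K u - K v‖ ≤ ‖K u - K v - D (u - v)‖ := by
      have := norm_sub_norm_le (D (u - v)) (K u - K v)
      rwa [norm_sub_rev (D (u - v))] at this
    have h2 : ‖K u - K v - D (u - v)‖ ≤ (1 - Real.exp (-γ)) * a * ‖u - v‖ :=
      hKey.trans (mul_le_mul_of_nonneg_right hBρ2 (norm_nonneg _))
    nlinarith [norm_nonneg (u - v)]
  · -- upper bound
    have h0 : D (u - v) + (K u - K v - D (u - v)) = K u - K v := by abel
    calc ‖K u - K v‖ = ‖D (u - v) + (K u - K v - D (u - v))‖ := by rw [h0]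
      _ ≤ ‖D (u - v)‖ + ‖K u - K v - D (u - v)‖ := norm_add_le _ _
      _ ≤ b * ‖u - v‖ + (Real.exp γ - 1) * b * ‖u - v‖ :=
          add_le_add hDu (hKey.trans (mul_le_mul_of_nonneg_right hBρ1 (norm_nonneg _)))
      _ = b * Real.exp γ * ‖u - v‖ := by ring
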